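/- Let U(t,s) = ∑_{m=0}^{2n-2} q_m(t) Λ^m + sΛ' - (-1)^n s² Λ'' be the 2n×2n matrix from the type D f-KT hierarchy, with Λ, Λ', Λ'' as defined. Let σ ∈ O_{2n} be the permutation matrix swapping indices n and n+1 (identity elsewhere). Then σ⁻¹ U(t,s) σ = U(t,-s). -/

import Mathlib

open Finset

noncomputable def genFn (n : ℕ) (t : ℕ → ℂ) : PowerSeries ℂ :=
  ∑ k ∈ Finset.Icc 1 (n-1), (PowerSeries.monomial (2*k-1)) (t (2*k-1))

noncomputable def qn (n : ℕ) (t : ℕ → ℂ) (m : ℕ) : ℂ :=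
  ∑ k ∈ Finset.range (m+1), PowerSeries.coeff m (genFn n t ^ k) / (Nat.factorial k : ℂ)

noncomputable def Lam (n : ℕ) : Matrix (Fin (2*n)) (Fin (2*n)) ℂ :=
  Matrix.of fun i j =>
    (if (j:ℕ)+1 = (i:ℕ)+2 ∧ (i:ℕ)+1 ≠ n then (1:ℂ) else 0)
    + (if (i:ℕ)+1 = n-1 ∧ (j:ℕ)+1 = n+1 then 1 else 0)
    + (if (i:ℕ)+1 = n ∧ (j:ℕ)+1 = n+2 then 1 else 0)

noncomputable def Lam' (n : ℕ) : Matrix (Fin (2*n)) (Fin (2*n)) ℂ :=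
  Matrix.of fun i j =>
    (if (i:ℕ)+1 = 1 ∧ (j:ℕ)+1 = n then (-1:ℂ) else 0)
    + (if (i:ℕ)+1 = 1 ∧ (j:ℕ)+1 = n+1 then 1 else 0)
    + (if (i:ℕ)+1 = n ∧ (j:ℕ)+1 = 2*n then (-1:ℂ)^n else 0)
    + (if (i:ℕ)+1 = n+1 ∧ (j:ℕ)+1 = 2*n then -(-1:ℂ)^n else 0)

noncomputable def Lam'' (n : ℕ) : Matrix (Fin (2*n)) (Fin (2*n)) ℂ :=
  Matrix.of fun i j => if (i:ℕ)+1 = 1 ∧ (j:ℕ)+1 = 2*n then (1:ℂ) else 0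

noncomputable def Umat (n : ℕ) (t : ℕ → ℂ) (s : ℂ) : Matrix (Fin (2*n)) (Fin (2*n)) ℂ :=
  ∑ m ∈ Finset.range (2*n-1), qn n t m • Lam n ^ m + s • Lam' n - ((-1:ℂ)^n * s^2) • Lam'' n

noncomputable def sigmaMat (n : ℕ) : Matrix (Fin (2*n)) (Fin (2*n)) ℂ :=
  Matrix.of fun i j =>
    if ((i:ℕ)+1 = n ∧ (j:ℕ)+1 = n+1) ∨ ((i:ℕ)+1 = n+1 ∧ (j:ℕ)+1 = n) ∨
       ((i:ℕ) = (j:ℕ) ∧ (i:ℕ)+1 ≠ n ∧ (i:ℕ)+1 ≠ n+1) then (1:ℂ) else 0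

/-- The index swap permutation (0-based: swaps n-1 and n). -/
def swp (n : ℕ) (hn : 2 ≤ n) : Equiv.Perm (Fin (2*n)) :=
  Equiv.swap ⟨n-1, by omega⟩ ⟨n, by omega⟩

lemma swp_val (n : ℕ) (hn : 2 ≤ n) (i : Fin (2*n)) :
    ((swp n hn i : Fin (2*n)) : ℕ) =
      if (i:ℕ) = n-1 then n else if (i:ℕ) = n then n-1 else (i:ℕ) := by
  rcases i with ⟨iv, hiv⟩
  simp only [Fin.val_mk]
  by_cases h1 : iv = n - 1
  · subst h1
    have : swp n hn ⟨n-1, hiv⟩ = ⟨n, by omega⟩ := Equiv.swap_apply_left _ _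
    rw [this]
    simp
  · by_cases h2 : iv = n
    · have hfe : (⟨iv, hiv⟩ : Fin (2*n)) = ⟨n, by omega⟩ := by simp [Fin.ext_iff, h2]
      rw [hfe]
      have : swp n hn ⟨n, by omega⟩ = ⟨n-1, by omega⟩ := Equiv.swap_apply_right _ _
      rw [this]
      simp only [Fin.val_mk, h2]
      rw [if_neg (by omega)]
      simp
    · have : swp n hn ⟨iv, hiv⟩ = ⟨iv, hiv⟩ :=
        Equiv.swap_apply_of_ne_of_ne (by simp [Fin.ext_iff, h1]) (by simp [Fin.ext_iff, h2])
      rw [this]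
      simp [h1, h2]

lemma sigma_apply (n : ℕ) (hn : 2 ≤ n) (i j : Fin (2*n)) :
    sigmaMat n i j = if j = swp n hn i then 1 else 0 := by
  have hv := swp_val n hn i
  have hi := i.isLt
  have hj := j.isLt
  simp only [sigmaMat, Matrix.of_apply, Fin.ext_iff, hv]
  split_ifs <;> first | rfl | (exfalso; omega)

lemma swp_invol (n : ℕ) (hn : 2 ≤ n) (i : Fin (2*n)) : swp n hn (swp n hn i) = i := by
  simp [swp, Equiv.swap_apply_self]

lemma sigma_mul (n : ℕ) (hn : 2 ≤ n) (A : Matrix (Fin (2*n)) (Fin (2*n)) ℂ) :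
    sigmaMat n * A = Matrix.of fun i j => A (swp n hn i) j := by
  ext i j
  simp only [Matrix.mul_apply, sigma_apply n hn, Matrix.of_apply, ite_mul, one_mul, zero_mul]
  simp

lemma mul_sigma (n : ℕ) (hn : 2 ≤ n) (A : Matrix (Fin (2*n)) (Fin (2*n)) ℂ) :
    A * sigmaMat n = Matrix.of fun i j => A i (swp n hn j) := by
  ext i j
  simp only [Matrix.mul_apply, sigma_apply n hn, Matrix.of_apply, mul_ite, mul_one, mul_zero]
  have : ∀ k : Fin (2*n), (j = swp n hn k) ↔ (k = swp n hn j) := by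
    intro k
    constructor <;> intro h <;> subst h <;> rw [swp_invol]
  simp_rw [this]
  simp

lemma sigma_sq (n : ℕ) (hn : 2 ≤ n) : sigmaMat n * sigmaMat n = 1 := by
  rw [mul_sigma n hn]
  ext i j
  rw [Matrix.of_apply, sigma_apply n hn, Matrix.one_apply]
  by_cases h : i = j
  · subst h; simp [swp_invol]
  · have : ¬ (swp n hn j = swp n hn i) := fun hc => h ((swp n hn).injective hc).symm
    simp [h, this, eq_comm]

lemma conj_apply (n : ℕ) (hn : 2 ≤ n) (A : Matrix (Fin (2*n)) (Fin (2*n)) ℂ) :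
    sigmaMat n * A * sigmaMat n = Matrix.of fun i j => A (swp n hn i) (swp n hn j) := by
  rw [mul_sigma n hn, sigma_mul n hn]
  rfl

set_option maxHeartbeats 1600000 in
lemma lam_conj (n : ℕ) (hn : 2 ≤ n) :
    sigmaMat n * Lam n * sigmaMat n = Lam n := by
  rw [conj_apply n hn]
  ext i j
  have hvi := swp_val n hn i
  have hvj := swp_val n hn j
  have hi := i.isLt
  have hj := j.isLt
  simp only [Matrix.of_apply, Lam]
  rw [hvi, hvj]
  split_ifs <;> first | (exfalso; omega) | norm_num

set_option maxHeartbeats 1600000 in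
lemma lam'_conj (n : ℕ) (hn : 2 ≤ n) :
    sigmaMat n * Lam' n * sigmaMat n = - Lam' n := by
  rw [conj_apply n hn]
  ext i j
  have hvi := swp_val n hn i
  have hvj := swp_val n hn j
  have hi := i.isLt
  have hj := j.isLt
  simp only [Matrix.of_apply, Lam', Matrix.neg_apply]
  rw [hvi, hvj]
  split_ifs <;> first | (exfalso; omega) | ring

set_option maxHeartbeats 1600000 in
lemma lam''_conj (n : ℕ) (hn : 2 ≤ n) :
    sigmaMat n * Lam'' n * sigmaMat n = Lam'' n := by
  rw [conj_apply n hn]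
  ext i j
  have hvi := swp_val n hn i
  have hvj := swp_val n hn j
  have hi := i.isLt
  have hj := j.isLt
  simp only [Matrix.of_apply, Lam'']
  rw [hvi, hvj]
  split_ifs <;> first | (exfalso; omega) | rfl

theorem stmt16 (n : ℕ) (hn : 2 ≤ n) (t : ℕ → ℂ) (s : ℂ) :
    (sigmaMat n)⁻¹ * Umat n t s * sigmaMat n = Umat n t (-s) := by
  have hσσ := sigma_sq n hn
  have hinv : (sigmaMat n)⁻¹ = sigmaMat n := Matrix.inv_eq_left_inv hσσ
  rw [hinv]
  set σ := sigmaMat n with hσ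
  have u : (Matrix (Fin (2*n)) (Fin (2*n)) ℂ)ˣ := ⟨σ, σ, hσσ, hσσ⟩
  have hpow : ∀ m : ℕ, σ * Lam n ^ m * σ = Lam n ^ m := by
    intro m
    have h := Units.conj_pow (⟨σ, σ, hσσ, hσσ⟩ : (Matrix (Fin (2*n)) (Fin (2*n)) ℂ)ˣ) (Lam n) m
    simp only [Units.inv_mk] at h
    rw [lam_conj n hn] at h
    exact h.symm
  unfold Umat
  rw [Matrix.mul_sub, Matrix.sub_mul, Matrix.mul_add, Matrix.add_mul]
  rw [Finset.mul_sum, Finset.sum_mul]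
  have h1 : ∀ m ∈ Finset.range (2*n-1),
      σ * (qn n t m • Lam n ^ m) * σ = qn n t m • Lam n ^ m := by
    intro m _
    rw [Matrix.mul_smul, Matrix.smul_mul, hpow]
  rw [Finset.sum_congr rfl h1]
  rw [Matrix.mul_smul, Matrix.smul_mul, lam'_conj n hn]
  rw [Matrix.mul_smul, Matrix.smul_mul, lam''_conj n hn]
  rw [smul_neg, ← neg_smul, neg_sq]
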